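/- arXiv:2011.10943 — 6 statements merged into one kernel-verified Lean document; each statement's English description precedes it below -/
import Mathlib

section
/- Let N, U be positive natural numbers and h ∈ ℂ^N with h ≠ 0. Then U·‖h‖² is the greatest element of the set {t : ℝ | ∃ P : Matrix (Fin N) (Fin U) ℂ, (Σ_{n,u} |P n u|² ≤ U) ∧ t = Σ_u |(Pᴴ h)_u|²}; that is, for every matrix P with squared Frobenius norm at most U one has hᴴPPᴴh = Σ_u |(Pᴴh)_u|² ≤ U·‖h‖², and this value is attained by some such P. -/
open Finset Matrix

/-- `U·‖h‖²` is the greatest value of `hᴴPPᴴh = Σ_u |(Pᴴh)_u|²` over matrices `P`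
with squared Frobenius norm at most `U`. -/
theorem stmt_5 (N U : ℕ) (hN : 0 < N) (hU : 0 < U) (h : Fin N → ℂ) (hh : h ≠ 0) :
    IsGreatest {t : ℝ | ∃ P : Matrix (Fin N) (Fin U) ℂ,
        (∑ n, ∑ u, ‖P n u‖ ^ 2 ≤ (U : ℝ)) ∧
        t = ∑ u, ‖(Pᴴ *ᵥ h) u‖ ^ 2}
      ((U : ℝ) * ∑ n, ‖h n‖ ^ 2) := by
  set S := ∑ n, ‖h n‖ ^ 2 with hSdef
  have hS0 : 0 < S := by
    obtain ⟨n, hn⟩ : ∃ n, h n ≠ 0 := by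
      by_contra hc; push_neg at hc; exact hh (funext hc)
    exact Finset.sum_pos' (fun i _ => by positivity)
      ⟨n, Finset.mem_univ n, pow_pos (norm_pos_iff.mpr hn) 2⟩
  have hsqrt : (0:ℝ) < Real.sqrt S := Real.sqrt_pos.mpr hS0
  constructor
  · refine ⟨fun n _ => (h n) / ((Real.sqrt S : ℝ) : ℂ), ?_, ?_⟩
    · have habs : ∀ n : Fin N,
          ‖(h n) / ((Real.sqrt S : ℝ) : ℂ)‖ ^ 2
            = ‖h n‖ ^ 2 / S := by
        intro n
        rw [norm_div, Complex.norm_real, Real.norm_eq_abs, abs_of_pos hsqrt, div_pow,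
          Real.sq_sqrt hS0.le]
      calc ∑ n, ∑ _u : Fin U, ‖(h n) / ((Real.sqrt S : ℝ) : ℂ)‖ ^ 2
          = ∑ n, (U : ℝ) * (‖h n‖ ^ 2 / S) := by
            refine Finset.sum_congr rfl fun n _ => ?_
            rw [Finset.sum_const, habs]
            simp [mul_comm]
        _ = (U : ℝ) * (S / S) := by
            rw [← Finset.mul_sum, ← Finset.sum_div]
        _ ≤ (U : ℝ) := by rw [div_self hS0.ne']; simp
    · have hval : ∀ u : Fin U,
          ((fun n (_ : Fin U) => (h n) / ((Real.sqrt S : ℝ) : ℂ))ᴴ *ᵥ h) u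
            = ((S : ℝ) : ℂ) / ((Real.sqrt S : ℝ) : ℂ) := by
        intro u
        simp only [Matrix.mulVec, dotProduct, Matrix.conjTranspose_apply]
        have e1 : ∀ x : Fin N, star (h x / ((Real.sqrt S : ℝ) : ℂ)) * h x
            = (star (h x) * h x) / ((Real.sqrt S : ℝ) : ℂ) := by
          intro x
          rw [star_div₀, Complex.star_def, Complex.conj_ofReal]
          ring
        have e2 : ∀ x : Fin N, star (h x) * h x
            = ((‖h x‖ ^ 2 : ℝ) : ℂ) := by
          intro x
          rw [Complex.star_def, mul_comm, Complex.mul_conj]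
          norm_cast
          rw [Complex.normSq_eq_norm_sq]
        change ∑ x, star (h x / ((Real.sqrt S : ℝ) : ℂ)) * h x = _
        rw [Finset.sum_congr rfl (fun x _ => e1 x), ← Finset.sum_div]
        congr 1
        calc ∑ x, star (h x) * h x
            = ∑ x, ((‖h x‖ ^ 2 : ℝ) : ℂ) :=
              Finset.sum_congr rfl fun x _ => e2 x
          _ = ((S : ℝ) : ℂ) := by rw [hSdef]; push_cast; ring
      have : ∀ u : Fin U,
          ‖((fun n (_ : Fin U) => (h n) / ((Real.sqrt S : ℝ) : ℂ))ᴴ *ᵥ h) u‖ ^ 2 = S := by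
        intro u
        rw [hval u, norm_div, Complex.norm_real, Complex.norm_real, Real.norm_eq_abs, Real.norm_eq_abs,
          abs_of_pos hS0, abs_of_pos hsqrt, div_pow, Real.sq_sqrt hS0.le,
          sq, mul_div_assoc, div_self hS0.ne', mul_one]
      simp [this, Finset.sum_const, mul_comm]
  · rintro t ⟨P, hP, rfl⟩
    have key : ∀ u : Fin U, ‖(Pᴴ *ᵥ h) u‖ ^ 2
        ≤ (∑ n, ‖P n u‖ ^ 2) * S := by
      intro u
      have h1 : ‖(Pᴴ *ᵥ h) u‖
          ≤ ∑ n, ‖P n u‖ * ‖h n‖ := by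
        simp only [Matrix.mulVec, dotProduct, Matrix.conjTranspose_apply]
        refine le_trans (norm_sum_le _ _) ?_
        refine Finset.sum_le_sum fun n _ => ?_
        rw [norm_mul]
        simp
      have h2 : (∑ n, ‖P n u‖ * ‖h n‖) ^ 2
          ≤ (∑ n, ‖P n u‖ ^ 2) * ∑ n, ‖h n‖ ^ 2 :=
        Finset.sum_mul_sq_le_sq_mul_sq _ _ _
      calc ‖(Pᴴ *ᵥ h) u‖ ^ 2
          ≤ (∑ n, ‖P n u‖ * ‖h n‖) ^ 2 := by
            apply pow_le_pow_left₀ (norm_nonneg _) h1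
        _ ≤ _ := h2
    calc ∑ u, ‖(Pᴴ *ᵥ h) u‖ ^ 2
        ≤ ∑ u, (∑ n, ‖P n u‖ ^ 2) * S :=
          Finset.sum_le_sum fun u _ => key u
      _ = (∑ u, ∑ n, ‖P n u‖ ^ 2) * S := by rw [Finset.sum_mul]
      _ = (∑ n, ∑ u, ‖P n u‖ ^ 2) * S := by rw [Finset.sum_comm]
      _ ≤ (U : ℝ) * S := by
          apply mul_le_mul_of_nonneg_right hP hS0.le
end

section
/- Let N be a positive natural number, A : Matrix (Fin N) (Fin N) ℂ positive semidefinite, h ∈ ℂ^N, and B = A − h hᴴ, where h hᴴ is the outer product matrix with (i,j) entry h_i·conj(h_j). Suppose v, w ∈ ℂ^N, r, s ∈ ℝ satisfy B v = r·v, B w = s·w, r < 0, s < 0, and ⟨v, w⟩ = 0. Then v = 0 or w = 0. In other words, a positive semidefinite matrix minus a rank-one Hermitian term has at most one negative eigenvalue. -/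
open Finset Matrix ComplexConjugate
open scoped ComplexOrder

/-- A positive semidefinite matrix minus a rank-one Hermitian term `h hᴴ` has at most one
negative eigenvalue: two orthogonal eigenvectors of `B = A − h hᴴ` with negative
eigenvalues cannot both be nonzero. -/
theorem stmt_7 (N : ℕ) (hN : 0 < N)
    (A : Matrix (Fin N) (Fin N) ℂ) (hA : A.PosSemidef)
    (h : Fin N → ℂ)
    (B : Matrix (Fin N) (Fin N) ℂ)
    (hB : B = A - Matrix.of (fun i j => h i * conj (h j)))
    (v w : Fin N → ℂ) (r s : ℝ) (hr : r < 0) (hs : s < 0)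
    (hv : B *ᵥ v = (r : ℂ) • v) (hw : B *ᵥ w = (s : ℂ) • w)
    (hvw : ∑ i, conj (v i) * w i = 0) :
    v = 0 ∨ w = 0 := by
  by_contra hcon
  push_neg at hcon
  obtain ⟨hv0, hw0⟩ := hcon
  classical
  set cv : ℂ := ∑ j, conj (h j) * v j with hcv
  set cw : ℂ := ∑ j, conj (h j) * w j with hcwdef
  -- B applied to any vector
  have hBx : ∀ x : Fin N → ℂ, B *ᵥ x = A *ᵥ x - (∑ j, conj (h j) * x j) • h := by
    intro x
    subst hB
    funext i
    simp only [Matrix.sub_mulVec, Pi.sub_apply, Pi.smul_apply, smul_eq_mul]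
    congr 1
    simp only [mulVec, dotProduct, Matrix.of_apply, Finset.sum_mul]
    refine Finset.sum_congr rfl fun j _ => by ring
  -- norms
  set nv : ℝ := ∑ i, Complex.normSq (v i) with hnv
  set nw : ℝ := ∑ i, Complex.normSq (w i) with hnw
  have hselfdot : ∀ x : Fin N → ℂ,
      star x ⬝ᵥ x = ((∑ i, Complex.normSq (x i) : ℝ) : ℂ) := by
    intro x
    push_cast
    simp only [dotProduct, Pi.star_apply]
    exact Finset.sum_congr rfl fun i _ => by
      rw [Complex.normSq_eq_conj_mul_self]; rfl
  have hnvpos : 0 < nv := by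
    obtain ⟨i, hi⟩ := Function.ne_iff.mp hv0
    exact Finset.sum_pos' (fun j _ => Complex.normSq_nonneg _)
      ⟨i, Finset.mem_univ i, Complex.normSq_pos.mpr hi⟩
  have hnwpos : 0 < nw := by
    obtain ⟨i, hi⟩ := Function.ne_iff.mp hw0
    exact Finset.sum_pos' (fun j _ => Complex.normSq_nonneg _)
      ⟨i, Finset.mem_univ i, Complex.normSq_pos.mpr hi⟩
  -- star x ⬝ᵥ h = conj (c x)
  have hstarh : ∀ x : Fin N → ℂ, star x ⬝ᵥ h = conj (∑ j, conj (h j) * x j) := by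
    intro x
    rw [map_sum]
    simp only [dotProduct, Pi.star_apply, RingHom.map_mul, RingHomCompTriple.comp_apply,
      Complex.conj_conj]
    exact Finset.sum_congr rfl fun j _ => by simp [mul_comm]
  -- positivity of A's quadratic form, real part
  have hrepos : ∀ x : Fin N → ℂ, 0 ≤ (star x ⬝ᵥ (A *ᵥ x)).re := by
    intro x
    have hpos : 0 ≤ star x ⬝ᵥ (A *ᵥ x) := hA.dotProduct_mulVec_nonneg x
    rw [Complex.le_def] at hpos
    simpa using hpos.1
  -- a negative-eigenvalue eigenvector has nonzero overlap with h
  have key : ∀ (x : Fin N → ℂ) (t : ℝ), B *ᵥ x = (t : ℂ) • x → t < 0 →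
      0 < (∑ i, Complex.normSq (x i)) → (∑ j, conj (h j) * x j) ≠ 0 := by
    intro x t hx ht hnx
    set cx : ℂ := ∑ j, conj (h j) * x j with hcx
    set nx : ℝ := ∑ i, Complex.normSq (x i) with hnxdef
    have h1 : star x ⬝ᵥ (A *ᵥ x) = ((t * nx + Complex.normSq cx : ℝ) : ℂ) := by
      have h2 : star x ⬝ᵥ (B *ᵥ x) = (t : ℂ) * (nx : ℂ) := by
        rw [hx, dotProduct_smul, smul_eq_mul, hselfdot]
      rw [hBx x, dotProduct_sub, dotProduct_smul, hstarh, smul_eq_mul, ← hcx] at h2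
      have h3 : cx * conj cx = (Complex.normSq cx : ℂ) := by
        rw [mul_comm, Complex.normSq_eq_conj_mul_self]
      push_cast
      linear_combination h2 + h3
    have hre := hrepos x
    rw [h1, Complex.ofReal_re] at hre
    intro hzero
    rw [hzero] at hre
    simp only [map_zero, add_zero] at hre
    nlinarith
  have hcvne : cv ≠ 0 := key v r hv hr hnvpos
  have hcwne : cw ≠ 0 := key w s hw hs hnwpos
  -- the combination u is orthogonal to h
  set u : Fin N → ℂ := cw • v - cv • w with hu
  have hcu : (∑ j, conj (h j) * u j) = 0 := by
    have : ∑ j, conj (h j) * u j = cw * cv - cv * cw := by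
      simp only [hu, Pi.sub_apply, Pi.smul_apply, smul_eq_mul, mul_sub]
      rw [Finset.sum_sub_distrib, hcv, hcwdef, Finset.mul_sum, Finset.mul_sum]
      congr 1 <;> exact Finset.sum_congr rfl fun j _ => by ring
    rw [this]; ring
  have hBu : B *ᵥ u = A *ᵥ u := by
    rw [hBx u, hcu, zero_smul, sub_zero]
  have hBu2 : B *ᵥ u = (cw * r) • v - (cv * s) • w := by
    rw [hu, Matrix.mulVec_sub, Matrix.mulVec_smul, Matrix.mulVec_smul, hv, hw,
      smul_smul, smul_smul]
  -- dot products
  have hsvw : star v ⬝ᵥ w = 0 := by simpa [dotProduct] using hvw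
  have hswv : star w ⬝ᵥ v = 0 := by
    have : conj (∑ i, conj (v i) * w i) = 0 := by rw [hvw, map_zero]
    rw [map_sum] at this
    simpa [dotProduct, mul_comm] using this
  have hD : star u ⬝ᵥ (B *ᵥ u)
      = ((r * Complex.normSq cw * nv + s * Complex.normSq cv * nw : ℝ) : ℂ) := by
    have hstaru : star u = conj cw • star v - conj cv • star w := by
      funext i
      simp [hu, mul_comm]
    rw [hBu2, hstaru]
    rw [sub_dotProduct, smul_dotProduct, smul_dotProduct, dotProduct_sub, dotProduct_sub,
      dotProduct_smul, dotProduct_smul, dotProduct_smul, dotProduct_smul,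
      hselfdot v, hselfdot w, hsvw, hswv]
    have h4 : cw * conj cw = (Complex.normSq cw : ℂ) := by
      rw [mul_comm, Complex.normSq_eq_conj_mul_self]
    have h5 : cv * conj cv = (Complex.normSq cv : ℂ) := by
      rw [mul_comm, Complex.normSq_eq_conj_mul_self]
    rw [← hnv, ← hnw]
    push_cast
    simp only [smul_eq_mul]
    linear_combination ((r : ℂ) * (nv : ℂ)) * h4 + ((s : ℂ) * (nw : ℂ)) * h5
  have hfinal : 0 ≤ r * Complex.normSq cw * nv + s * Complex.normSq cv * nw := by
    have := hrepos u
    rw [← hBu, hD, Complex.ofReal_re] at this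
    exact this
  have hcv2 : 0 < Complex.normSq cv := Complex.normSq_pos.mpr hcvne
  have hcw2 : 0 < Complex.normSq cw := Complex.normSq_pos.mpr hcwne
  nlinarith [mul_pos hcw2 hnvpos, mul_pos hcv2 hnwpos,
    mul_neg_of_neg_of_pos hr (mul_pos hcw2 hnvpos),
    mul_neg_of_neg_of_pos hs (mul_pos hcv2 hnwpos)]
end

section
/- Let N, m be positive natural numbers, H̃ : Matrix (Fin N) (Fin m) ℂ, h ∈ ℂ^N, and μ ≥ 0 a real number. Let R = μ·(H̃ H̃ᴴ) − h hᴴ, which is Hermitian (with a proof hR : R.IsHermitian). If there exists x ∈ ℂ^N with H̃ᴴ x = 0 and ⟨h, x⟩ ≠ 0, then R has a negative eigenvalue: there exists an index i such that hR.eigenvalues i < 0. -/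
open Finset Matrix ComplexConjugate

/-- If there is `x` in the nullspace of `H̃ᴴ` not orthogonal to `h`, then the Hermitian
matrix `R = μ·H̃ H̃ᴴ − h hᴴ` (with `μ ≥ 0`) has a negative eigenvalue. -/
theorem stmt_8 (N m : ℕ) (hN : 0 < N) (hm : 0 < m)
    (Ht : Matrix (Fin N) (Fin m) ℂ) (h : Fin N → ℂ) (μ : ℝ) (hμ : 0 ≤ μ)
    (R : Matrix (Fin N) (Fin N) ℂ)
    (hRdef : R = (μ : ℂ) • (Ht * Htᴴ) - Matrix.of (fun i j => h i * conj (h j)))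
    (hR : R.IsHermitian)
    (x : Fin N → ℂ) (hx1 : Htᴴ *ᵥ x = 0) (hx2 : ∑ i, conj (h i) * x i ≠ 0) :
    ∃ i, hR.eigenvalues i < 0 := by
  by_contra hc
  push_neg at hc
  have hps := hR.posSemidef_iff_eigenvalues_nonneg.mpr hc
  have hq := by open scoped ComplexOrder in exact hps.dotProduct_mulVec_nonneg x
  set s : ℂ := ∑ i, conj (h i) * x i with hs
  have hRx : R *ᵥ x = fun i => -(h i * s) := by
    subst hRdef
    funext i
    simp only [sub_mulVec, smul_mulVec, Pi.sub_apply, Pi.smul_apply,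
      ← mulVec_mulVec, hx1, mulVec_zero, smul_zero, Pi.zero_apply, zero_sub]
    congr 1
    simp [mulVec, dotProduct, of_apply, mul_assoc, Finset.mul_sum, hs]
  rw [hRx] at hq
  have key : ∑ i, star (x i) * (h i * s) = conj s * s := by
    rw [hs, map_sum, Finset.sum_mul]
    refine Finset.sum_congr rfl fun i _ => ?_
    simp only [_root_.map_mul, Complex.conj_conj, Pi.star_apply, RCLike.star_def]
    ring
  have this1 : (star x) ⬝ᵥ (fun i => -(h i * s)) = -(conj s * s) := by
    simp only [dotProduct, Pi.star_apply, mul_neg, Finset.sum_neg_distrib, key]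
  rw [this1, mul_comm, Complex.mul_conj, ← Complex.ofReal_neg] at hq
  rw [Complex.zero_le_real] at hq
  have := Complex.normSq_pos.mpr hx2
  linarith
end

section
/- (Theorem 2) Let N, U be positive natural numbers. For each u ∈ Fin U let R_u : Matrix (Fin N) (Fin N) ℂ be Hermitian and suppose each R_u has a negative eigenvalue, i.e., there exist r_u < 0 and a unit vector v_u ∈ ℂ^N with R_u v_u = r_u·v_u. Let a > 0 and ρ > 0 be real numbers and c : Fin U → ℂ^N. For P : Fin U → ℂ^N define ψ(P) = Σ_u ‖P u‖², ψ'(P) = Σ_u ‖P u − c u‖², and f(P) = Σ_u Re((P u)ᴴ R_u (P u)). Then for every P₀ satisfying the strict inequalities ψ(P₀) < a and ψ'(P₀) < ρ, there exists Q with ψ(Q) ≤ a, ψ'(Q) ≤ ρ, and f(Q) < f(P₀). Consequently the minimal value of the objective −J = f over the constraint set {P : ψ(P) ≤ a, ψ'(P) ≤ ρ} is achieved only on the surface of the constraint sets. -/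
open Finset Matrix ComplexConjugate

private lemma abs_sq_eq_re (z : ℂ) : ‖z‖ ^ 2 = (conj z * z).re := by
  simp [Complex.sq_norm, Complex.normSq_apply, Complex.mul_re]

/-- norm expansion -/
private lemma norm_expand {N : ℕ} (x y : Fin N → ℂ) (s : ℂ) :
    ∑ i, ‖x i + s * y i‖ ^ 2
      = ∑ i, ‖x i‖ ^ 2 + Complex.normSq s * ∑ i, ‖y i‖ ^ 2
        + 2 * (s * ∑ i, conj (x i) * y i).re := by
  have h : ∀ i, ‖x i + s * y i‖ ^ 2
      = ‖x i‖ ^ 2 + Complex.normSq s * ‖y i‖ ^ 2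
        + 2 * (s * (conj (x i) * y i)).re := by
    intro i
    rw [Complex.sq_norm, Complex.normSq_add, Complex.sq_norm, Complex.sq_norm,
      Complex.normSq_mul]
    have h2 : (x i * conj (s * y i)).re = (s * (conj (x i) * y i)).re := by
      have h3 : x i * conj (s * y i) = conj (s * (conj (x i) * y i)) := by
        simp only [_root_.map_mul, Complex.conj_conj]
        ring
      rw [h3, Complex.conj_re]
    rw [h2]
  rw [Finset.sum_congr rfl (fun i _ => h i), Finset.sum_add_distrib,
    Finset.sum_add_distrib, ← Finset.mul_sum]
  congr 1
  rw [Finset.mul_sum, Complex.re_sum, Finset.mul_sum]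

/-- Theorem 2: if every `R_u` is Hermitian with a negative eigenvalue, then from any
strictly interior feasible point `P₀` (i.e. `ψ(P₀) < a` and `ψ'(P₀) < ρ`) the objective
`f(P) = Σ_u Re (P_uᴴ R_u P_u)` can be strictly decreased while staying feasible; hence the
minimum of `−J = f` is achieved only on the surface of the constraint sets. -/
theorem stmt_11 (N U : ℕ) (hN : 0 < N) (hU : 0 < U)
    (R : Fin U → Matrix (Fin N) (Fin N) ℂ) (hR : ∀ u, (R u).IsHermitian)
    (r : Fin U → ℝ) (v : Fin U → Fin N → ℂ)
    (hr : ∀ u, r u < 0)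
    (hv : ∀ u, R u *ᵥ v u = (r u : ℂ) • v u)
    (hv1 : ∀ u, ∑ i, conj (v u i) * v u i = 1)
    (a ρ : ℝ) (ha : 0 < a) (hρ : 0 < ρ) (c : Fin U → Fin N → ℂ)
    (P₀ : Fin U → Fin N → ℂ)
    (hψ : ∑ u, ∑ i, ‖P₀ u i‖ ^ 2 < a)
    (hψ' : ∑ u, ∑ i, ‖P₀ u i - c u i‖ ^ 2 < ρ) :
    ∃ Q : Fin U → Fin N → ℂ,
      (∑ u, ∑ i, ‖Q u i‖ ^ 2 ≤ a) ∧
      (∑ u, ∑ i, ‖Q u i - c u i‖ ^ 2 ≤ ρ) ∧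
      (∑ u, (∑ i, ∑ j, conj (Q u i) * R u i j * Q u j).re
        < ∑ u, (∑ i, ∑ j, conj (P₀ u i) * R u i j * P₀ u j).re) := by
  classical
  set u0 : Fin U := ⟨0, hU⟩ with hu0
  set p : Fin N → ℂ := P₀ u0 with hp
  set w : Fin N → ℂ := v u0 with hwdef
  set M : Matrix (Fin N) (Fin N) ℂ := R u0 with hM
  set r0 : ℝ := r u0 with hr0
  have hr0neg : r0 < 0 := hr u0
  have heig : ∀ i, ∑ j, M i j * w j = (r0 : ℂ) * w i := by
    intro i
    have := congrFun (hv u0) i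
    simpa [Matrix.mulVec, dotProduct] using this
  have hherm : ∀ i j, conj (M i j) = M j i := by
    intro i j; simpa using (hR u0).apply j i
  have hw1 : ∑ i, conj (w i) * w i = 1 := hv1 u0
  have hwnorm : ∑ i, ‖w i‖ ^ 2 = 1 := by
    have h := congrArg Complex.re hw1
    rw [Complex.re_sum] at h
    rw [Finset.sum_congr rfl (fun i _ => abs_sq_eq_re (w i))]
    simpa using h
  set m : ℂ := ∑ i, conj (p i) * w i with hm
  set k : ℂ := ∑ i, conj (p i - c u0 i) * w i with hk
  set t : ℂ := (r0 : ℂ) * m with ht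
  set δ : ℝ := min (a - ∑ u, ∑ i, ‖P₀ u i‖ ^ 2)
      (ρ - ∑ u, ∑ i, ‖P₀ u i - c u i‖ ^ 2) with hδ
  have hδpos : 0 < δ := lt_min (by linarith) (by linarith)
  have hδ1 : δ ≤ a - ∑ u, ∑ i, ‖P₀ u i‖ ^ 2 := min_le_left _ _
  have hδ2 : δ ≤ ρ - ∑ u, ∑ i, ‖P₀ u i - c u i‖ ^ 2 := min_le_right _ _
  set B : ℝ := max (‖m‖) (‖k‖) with hB
  have hB0 : 0 ≤ B := le_trans (norm_nonneg m) (le_max_left _ _)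
  obtain ⟨ε, hεpos, hε1, hεδ⟩ : ∃ ε : ℝ, 0 < ε ∧ ε ≤ 1 ∧ ε * (2 * B + 1) ≤ δ := by
    refine ⟨min 1 (δ / (2 * B + 1)), lt_min one_pos (div_pos hδpos (by linarith)),
      min_le_left _ _, ?_⟩
    have h1 : min 1 (δ / (2 * B + 1)) ≤ δ / (2 * B + 1) := min_le_right _ _
    have h2 : (0:ℝ) < 2 * B + 1 := by linarith
    calc min 1 (δ / (2 * B + 1)) * (2 * B + 1)
        ≤ (δ / (2 * B + 1)) * (2 * B + 1) :=
          mul_le_mul_of_nonneg_right h1 (le_of_lt h2)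
      _ = δ := by field_simp
  obtain ⟨s, habs_s, hst⟩ : ∃ s : ℂ, ‖s‖ = ε ∧ (s * t).re ≤ 0 := by
    by_cases h : t = 0
    · exact ⟨(ε : ℂ), by rw [Complex.norm_real, Real.norm_eq_abs, abs_of_pos hεpos], by simp [h]⟩
    · refine ⟨-(ε : ℂ) * conj t / ‖t‖, ?_, ?_⟩
      · rw [norm_div, norm_mul, norm_neg, Complex.norm_conj,
          Complex.norm_real, Complex.norm_real, norm_norm, Real.norm_eq_abs, abs_of_pos hεpos]
        rw [mul_div_assoc, div_self (ne_of_gt (norm_pos_iff.mpr h)), mul_one]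
      · have h4 : -(ε : ℂ) * conj t / (‖t‖ : ℂ) * t
            = ((-(ε * Complex.normSq t / ‖t‖) : ℝ) : ℂ) := by
          push_cast
          rw [Complex.normSq_eq_conj_mul_self]
          field_simp
        rw [h4, Complex.ofReal_re]
        have h5 := Complex.normSq_nonneg t
        have h6 := norm_pos_iff.mpr h
        have : 0 ≤ ε * Complex.normSq t / ‖t‖ := by positivity
        linarith
  have hnormSq_s : Complex.normSq s = ε ^ 2 := by
    rw [← Complex.sq_norm, habs_s]
  set q : Fin N → ℂ := fun i => p i + s * w i with hq
  set Q : Fin U → Fin N → ℂ := Function.update P₀ u0 q with hQ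
  have hQu0 : Q u0 = q := Function.update_self _ _ _
  have hQne : ∀ u, u ≠ u0 → Q u = P₀ u := fun u hu => Function.update_of_ne hu _ _
  have split : ∀ (F : Fin U → (Fin N → ℂ) → ℝ),
      ∑ u, F u (Q u) = (∑ u, F u (P₀ u)) + (F u0 q - F u0 p) := by
    intro F
    rw [← Finset.add_sum_erase _ (fun u => F u (Q u)) (Finset.mem_univ u0),
        ← Finset.add_sum_erase _ (fun u => F u (P₀ u)) (Finset.mem_univ u0)]
    have he : ∑ u ∈ Finset.univ.erase u0, F u (Q u)
        = ∑ u ∈ Finset.univ.erase u0, F u (P₀ u) := by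
      apply Finset.sum_congr rfl
      intro u hu
      rw [hQne u (Finset.ne_of_mem_erase hu)]
    rw [he, hQu0]
    ring
  have key1 : ∑ i, ‖q i‖ ^ 2
      ≤ ∑ i, ‖p i‖ ^ 2 + ε * (2 * B + 1) := by
    rw [hq]
    rw [norm_expand p w s, hwnorm, hnormSq_s, ← hm]
    have h1 : (s * m).re ≤ ε * B := by
      calc (s * m).re ≤ ‖s * m‖ := Complex.re_le_norm _
        _ = ε * ‖m‖ := by rw [norm_mul, habs_s]
        _ ≤ ε * B := mul_le_mul_of_nonneg_left (le_max_left _ _) (le_of_lt hεpos)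
    nlinarith [sq_nonneg ε, hεpos.le, hε1]
  have key2 : ∑ i, ‖q i - c u0 i‖ ^ 2
      ≤ ∑ i, ‖p i - c u0 i‖ ^ 2 + ε * (2 * B + 1) := by
    have hrw : ∀ i, q i - c u0 i = (p i - c u0 i) + s * w i := by
      intro i; rw [hq]; ring
    rw [Finset.sum_congr rfl (fun i _ => by rw [hrw i])]
    rw [norm_expand (fun i => p i - c u0 i) w s, hwnorm, hnormSq_s, ← hk]
    have h1 : (s * k).re ≤ ε * B := by
      calc (s * k).re ≤ ‖s * k‖ := Complex.re_le_norm _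
        _ = ε * ‖k‖ := by rw [norm_mul, habs_s]
        _ ≤ ε * B := mul_le_mul_of_nonneg_left (le_max_right _ _) (le_of_lt hεpos)
    nlinarith [sq_nonneg ε, hεpos.le, hε1]
  have quad : (∑ i, ∑ j, conj (q i) * M i j * q j)
      = (∑ i, ∑ j, conj (p i) * M i j * p j) + s * t + conj (s * t)
        + (Complex.normSq s : ℂ) * (r0 : ℂ) := by
    have hexp : ∀ i j, conj (q i) * M i j * q j
        = conj (p i) * M i j * p j + s * (conj (p i) * (M i j * w j))
          + conj s * (conj (w i) * M i j * p j)
          + (conj s * s) * (conj (w i) * (M i j * w j)) := by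
      intro i j
      rw [hq]
      simp only [map_add, _root_.map_mul]
      ring
    rw [Finset.sum_congr rfl (fun i _ => Finset.sum_congr rfl (fun j _ => hexp i j))]
    simp only [Finset.sum_add_distrib]
    have T2 : ∑ i, ∑ j, s * (conj (p i) * (M i j * w j)) = s * t := by
      have h7 : ∀ i, ∑ j, s * (conj (p i) * (M i j * w j))
          = s * (conj (p i) * ((r0 : ℂ) * w i)) := by
        intro i
        rw [← heig i, Finset.mul_sum, Finset.mul_sum]
      calc ∑ i, ∑ j, s * (conj (p i) * (M i j * w j))
          = ∑ i, s * (conj (p i) * ((r0 : ℂ) * w i)) :=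
            Finset.sum_congr rfl (fun i _ => h7 i)
        _ = s * ((r0 : ℂ) * ∑ i, conj (p i) * w i) := by
            rw [Finset.mul_sum, Finset.mul_sum]
            exact Finset.sum_congr rfl (fun i _ => by ring)
        _ = s * t := by simp only [ht, hm]
    have T3 : ∑ i, ∑ j, conj s * (conj (w i) * M i j * p j) = conj (s * t) := by
      have hcol : ∀ j, ∑ i, conj (w i) * M i j = (r0 : ℂ) * conj (w j) := by
        intro j
        have h8 : ∀ i, conj (w i) * M i j = conj (M j i * w i) := by
          intro i
          rw [_root_.map_mul, hherm j i]
          ring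
        rw [Finset.sum_congr rfl (fun i _ => h8 i), ← map_sum, heig j,
          _root_.map_mul]
        simp
      rw [Finset.sum_comm]
      have h9 : ∀ j, ∑ i, conj s * (conj (w i) * M i j * p j)
          = conj s * (((r0 : ℂ) * conj (w j)) * p j) := by
        intro j
        rw [← hcol j, Finset.sum_mul, Finset.mul_sum]
      have hcm : conj m = ∑ j, conj (w j) * p j := by
        simp only [hm, map_sum, _root_.map_mul, Complex.conj_conj]
        exact Finset.sum_congr rfl (fun j _ => mul_comm _ _)
      have hconj : conj (s * t) = conj s * ((r0 : ℂ) * ∑ j, conj (w j) * p j) := by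
        rw [_root_.map_mul, ht, _root_.map_mul, Complex.conj_ofReal, hcm]
      calc ∑ j, ∑ i, conj s * (conj (w i) * M i j * p j)
          = ∑ j, conj s * (((r0 : ℂ) * conj (w j)) * p j) :=
            Finset.sum_congr rfl (fun j _ => h9 j)
        _ = conj s * ((r0 : ℂ) * ∑ j, conj (w j) * p j) := by
            rw [Finset.mul_sum, Finset.mul_sum]
            exact Finset.sum_congr rfl (fun j _ => by ring)
        _ = conj (s * t) := hconj.symm
    have T4 : ∑ i, ∑ j, (conj s * s) * (conj (w i) * (M i j * w j))
        = (Complex.normSq s : ℂ) * (r0 : ℂ) := by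
      have h10 : ∀ i, ∑ j, (conj s * s) * (conj (w i) * (M i j * w j))
          = (conj s * s) * (conj (w i) * ((r0 : ℂ) * w i)) := by
        intro i
        rw [← heig i, Finset.mul_sum, Finset.mul_sum]
      rw [Finset.sum_congr rfl (fun i _ => h10 i), ← Finset.mul_sum]
      have h11 : ∑ i, conj (w i) * ((r0 : ℂ) * w i) = (r0 : ℂ) := by
        rw [Finset.sum_congr rfl
          (fun i _ => show conj (w i) * ((r0:ℂ) * w i) = (r0:ℂ) * (conj (w i) * w i)
            from by ring), ← Finset.mul_sum, hw1, mul_one]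
      rw [h11, ← Complex.normSq_eq_conj_mul_self]
    rw [T2, T3, T4]
  have hre : (∑ i, ∑ j, conj (q i) * M i j * q j).re
      = (∑ i, ∑ j, conj (p i) * M i j * p j).re + 2 * (s * t).re
        + Complex.normSq s * r0 := by
    rw [quad]
    simp [Complex.add_re, Complex.conj_re, Complex.mul_re]
    ring
  have hdec : (∑ i, ∑ j, conj (q i) * M i j * q j).re
      < (∑ i, ∑ j, conj (p i) * M i j * p j).re := by
    rw [hre, hnormSq_s]
    nlinarith [pow_pos hεpos 2]
  refine ⟨Q, ?_, ?_, ?_⟩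
  · calc ∑ u, ∑ i, ‖Q u i‖ ^ 2
        = (∑ u, ∑ i, ‖P₀ u i‖ ^ 2)
          + ((∑ i, ‖q i‖ ^ 2) - ∑ i, ‖p i‖ ^ 2) :=
          split (fun u x => ∑ i, ‖x i‖ ^ 2)
      _ ≤ a := by linarith
  · calc ∑ u, ∑ i, ‖Q u i - c u i‖ ^ 2
        = (∑ u, ∑ i, ‖P₀ u i - c u i‖ ^ 2)
          + ((∑ i, ‖q i - c u0 i‖ ^ 2)
            - ∑ i, ‖p i - c u0 i‖ ^ 2) :=
          split (fun u x => ∑ i, ‖x i - c u i‖ ^ 2)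
      _ ≤ ρ := by linarith
  · calc ∑ u, (∑ i, ∑ j, conj (Q u i) * R u i j * Q u j).re
        = (∑ u, (∑ i, ∑ j, conj (P₀ u i) * R u i j * P₀ u j).re)
          + ((∑ i, ∑ j, conj (q i) * R u0 i j * q j).re
            - (∑ i, ∑ j, conj (p i) * R u0 i j * p j).re) :=
          split (fun u x => (∑ i, ∑ j, conj (x i) * R u i j * x j).re)
      _ < ∑ u, (∑ i, ∑ j, conj (P₀ u i) * R u i j * P₀ u j).re := by
          rw [← hM]
          linarith
end

section
/- (Corollary 2) Let N, U be positive natural numbers. For each u ∈ Fin U let R_u : Matrix (Fin N) (Fin N) ℂ be Hermitian with a negative eigenvalue, i.e., there exist r_u < 0 and a unit vector v_u ∈ ℂ^N with R_u v_u = r_u·v_u. Let a > 0, ρ > 0 be real, c : Fin U → ℂ^N, and for P : Fin U → ℂ^N define ψ(P) = Σ_u ‖P u‖², ψ'(P) = Σ_u ‖P u − c u‖², f(P) = Σ_u Re((P u)ᴴ R_u (P u)). Suppose P★ is a global minimizer of f over K = {P : ψ(P) ≤ a ∧ ψ'(P) ≤ ρ}. Then every Q with ψ(Q) < a and ψ'(Q)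 < ρ satisfies f(Q) > f(P★); that is, the minimal level set {P : f(P) = f(P★)} meets K only on its boundary, so the optimal point lies on the tangent plane of the level surface f = J₀ with the constraint surface. -/
open Finset Matrix ComplexConjugate

/-- Corollary 2: if `P★` is a global minimizer of `f = −J` over the constraint set
`K = {P : ψ(P) ≤ a ∧ ψ'(P) ≤ ρ}` and every `R_u` is Hermitian with a negative eigenvalue,
then every strictly interior feasible point `Q` (with `ψ(Q) < a`, `ψ'(Q) < ρ`) satisfies
`f(Q) > f(P★)`: the minimal level set meets `K` only on its boundary. -/
theorem stmt_14 (N U : ℕ) (hN : 0 < N) (hU : 0 < U)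
    (R : Fin U → Matrix (Fin N) (Fin N) ℂ) (hR : ∀ u, (R u).IsHermitian)
    (r : Fin U → ℝ) (v : Fin U → Fin N → ℂ) (hr : ∀ u, r u < 0)
    (hv : ∀ u, R u *ᵥ v u = (r u : ℂ) • v u)
    (hv1 : ∀ u, ∑ i, conj (v u i) * v u i = 1)
    (a ρ : ℝ) (ha : 0 < a) (hρ : 0 < ρ) (c : Fin U → Fin N → ℂ)
    (f ψ ψ' : (Fin U → Fin N → ℂ) → ℝ)
    (hf : ∀ P, f P = ∑ u, (∑ i, ∑ j, conj (P u i) * R u i j * P u j).re)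
    (hψdef : ∀ P, ψ P = ∑ u, ∑ i, ‖P u i‖ ^ 2)
    (hψ'def : ∀ P, ψ' P = ∑ u, ∑ i, ‖P u i - c u i‖ ^ 2)
    (Pstar : Fin U → Fin N → ℂ)
    (hfeas : ψ Pstar ≤ a ∧ ψ' Pstar ≤ ρ)
    (hmin : ∀ P, ψ P ≤ a → ψ' P ≤ ρ → f Pstar ≤ f P) :
    ∀ Q, ψ Q < a → ψ' Q < ρ → f Q > f Pstar := by
  intro Q hQa hQρ
  by_contra hcon
  push_neg at hcon
  set u₀ : Fin U := ⟨0, hU⟩ with hu₀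
  set QQ : Fin N → ℂ := Q u₀ with hQQ
  set vv : Fin N → ℂ := v u₀ with hvvdef
  -- basic constants
  set b₀ : ℝ := (∑ i, ∑ j, conj (QQ i) * R u₀ i j * vv j).re with hb₀
  set β₁ : ℝ := ∑ i, (QQ i * conj (vv i)).re with hβ₁
  set β₂ : ℝ := ∑ i, ((QQ i - c u₀ i) * conj (vv i)).re with hβ₂
  set t : ℝ := min 1 (min ((a - ψ Q) / (2 * |β₁| + 2)) ((ρ - ψ' Q) / (2 * |β₂| + 2))) with htdef
  have hden1 : (0:ℝ) < 2 * |β₁| + 2 := by positivity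
  have hden2 : (0:ℝ) < 2 * |β₂| + 2 := by positivity
  have ht0 : 0 < t := by
    refine lt_min one_pos (lt_min ?_ ?_)
    · exact div_pos (by linarith) hden1
    · exact div_pos (by linarith) hden2
  have ht1 : t ≤ 1 := min_le_left _ _
  have hta : t * (2 * |β₁| + 2) ≤ a - ψ Q := by
    have h : t ≤ (a - ψ Q) / (2 * |β₁| + 2) := (min_le_right (1:ℝ) _).trans (min_le_left _ _)
    exact (le_div_iff₀ hden1).mp h
  have htρ : t * (2 * |β₂| + 2) ≤ ρ - ψ' Q := by
    have h : t ≤ (ρ - ψ' Q) / (2 * |β₂| + 2) := (min_le_right (1:ℝ) _).trans (min_le_right _ _)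
    exact (le_div_iff₀ hden2).mp h
  set εs : ℝ := if b₀ ≤ 0 then 1 else -1 with hεs
  set ε : ℝ := εs * t with hεdef
  have hεabs : |ε| = t := by
    rw [hεdef, abs_mul, abs_of_pos ht0]
    rcases le_or_gt b₀ 0 with h | h
    · simp [hεs, h]
    · simp [hεs, not_le.mpr h]
  have hε2 : ε ^ 2 = t ^ 2 := by rw [← sq_abs, hεabs]
  have hεb : ε * b₀ ≤ 0 := by
    rcases le_or_gt b₀ 0 with h | h
    · simp only [hεdef, hεs, if_pos h, one_mul]
      exact mul_nonpos_of_nonneg_of_nonpos ht0.le h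
    · simp only [hεdef, hεs, if_neg (not_le.mpr h)]
      nlinarith
  -- the perturbed point
  set Pε : Fin U → Fin N → ℂ := fun u => if u = u₀ then (fun i => QQ i + (ε:ℂ) * vv i) else Q u
    with hPεdef
  -- pointwise expansion of |z + ε w|^2
  have per : ∀ z w : ℂ, ‖z + (ε:ℂ) * w‖ ^ 2 =
      ‖z‖ ^ 2 + (2 * ε * (z * conj w).re + ε ^ 2 * ‖w‖ ^ 2) := by
    intro z w
    rw [Complex.sq_norm, Complex.sq_norm, Complex.sq_norm, Complex.normSq_add,
      Complex.normSq_mul, Complex.normSq_ofReal, _root_.map_mul, Complex.conj_ofReal]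
    have h2 : (z * ((ε:ℂ) * conj w)).re = ε * (z * conj w).re := by
      rw [mul_comm (ε:ℂ) (conj w), ← mul_assoc, mul_comm _ (ε:ℂ), Complex.re_ofReal_mul,
        mul_comm z (conj w)]
    rw [h2]; ring
  -- norm of v is 1
  have hvnorm : ∑ i, ‖vv i‖ ^ 2 = 1 := by
    have h1 := congrArg Complex.re (hv1 u₀)
    rw [Complex.re_sum] at h1
    calc ∑ i, ‖vv i‖ ^ 2 = ∑ i, (conj (vv i) * vv i).re := by
          refine Finset.sum_congr rfl fun i _ => ?_
          rw [← Complex.normSq_eq_conj_mul_self, Complex.ofReal_re, Complex.sq_norm]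
      _ = 1 := by simpa using h1
  -- ψ difference
  have hψdiff : ψ Pε = ψ Q + (2 * ε * β₁ + ε ^ 2) := by
    rw [hψdef, hψdef]
    have hsplit : ∀ u : Fin U, ∑ i, ‖Pε u i‖ ^ 2 =
        ∑ i, ‖Q u i‖ ^ 2 +
          (if u = u₀ then 2 * ε * β₁ + ε ^ 2 else 0) := by
      intro u
      by_cases h : u = u₀
      · subst h
        simp only [hPεdef, if_pos rfl, per]
        rw [Finset.sum_add_distrib, Finset.sum_add_distrib, ← Finset.mul_sum, ← Finset.mul_sum,
          hvnorm, ← hβ₁]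
        simp [hQQ]
      · simp [hPεdef, h]
    simp_rw [hsplit]
    rw [Finset.sum_add_distrib, Finset.sum_ite_eq' Finset.univ u₀]
    simp
  -- ψ' difference
  have hψ'diff : ψ' Pε = ψ' Q + (2 * ε * β₂ + ε ^ 2) := by
    rw [hψ'def, hψ'def]
    have hsplit : ∀ u : Fin U, ∑ i, ‖Pε u i - c u i‖ ^ 2 =
        ∑ i, ‖Q u i - c u i‖ ^ 2 +
          (if u = u₀ then 2 * ε * β₂ + ε ^ 2 else 0) := by
      intro u
      by_cases h : u = u₀
      · subst h
        simp only [hPεdef, if_pos rfl]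
        have harr : ∀ i : Fin N, QQ i + (ε:ℂ) * vv i - c u₀ i = (QQ i - c u₀ i) + (ε:ℂ) * vv i := by
          intro i; ring
        simp_rw [harr, per]
        rw [Finset.sum_add_distrib, Finset.sum_add_distrib, ← Finset.mul_sum, ← Finset.mul_sum,
          hvnorm, ← hβ₂]
        simp [hQQ]
      · simp [hPεdef, h]
    simp_rw [hsplit]
    rw [Finset.sum_add_distrib, Finset.sum_ite_eq' Finset.univ u₀]
    simp
  -- f difference
  have hherm : ∀ i j, conj (R u₀ i j) = R u₀ j i := fun i j => (hR u₀).apply j i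
  have hsvv : ∑ i, ∑ j, conj (vv i) * R u₀ i j * vv j = (r u₀ : ℂ) := by
    have hmv := congrFun (hv u₀)
    calc ∑ i, ∑ j, conj (vv i) * R u₀ i j * vv j
        = ∑ i, conj (vv i) * ((R u₀ *ᵥ vv) i) := by
          refine Finset.sum_congr rfl fun i _ => ?_
          rw [Matrix.mulVec, dotProduct, Finset.mul_sum]
          exact Finset.sum_congr rfl fun j _ => by ring
      _ = ∑ i, conj (vv i) * ((r u₀ : ℂ) * vv i) := by
          refine Finset.sum_congr rfl fun i _ => ?_
          rw [hmv i]; simp [hvvdef]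
      _ = (r u₀ : ℂ) * ∑ i, conj (vv i) * vv i := by
          rw [Finset.mul_sum]
          exact Finset.sum_congr rfl fun i _ => by ring
      _ = (r u₀ : ℂ) := by rw [hv1 u₀, mul_one]
  have hconjswap : ∑ i, ∑ j, conj (vv i) * R u₀ i j * QQ j =
      conj (∑ i, ∑ j, conj (QQ i) * R u₀ i j * vv j) := by
    rw [_root_.map_sum, Finset.sum_comm]
    refine Finset.sum_congr rfl fun j _ => ?_
    rw [_root_.map_sum]
    refine Finset.sum_congr rfl fun i _ => ?_
    rw [_root_.map_mul, _root_.map_mul, hherm, Complex.conj_conj]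
    ring
  have hfdiff : f Pε = f Q + (2 * ε * b₀ + ε ^ 2 * r u₀) := by
    rw [hf, hf]
    have hsplit : ∀ u : Fin U, (∑ i, ∑ j, conj (Pε u i) * R u i j * Pε u j).re =
        (∑ i, ∑ j, conj (Q u i) * R u i j * Q u j).re +
          (if u = u₀ then 2 * ε * b₀ + ε ^ 2 * r u₀ else 0) := by
      intro u
      by_cases h : u = u₀
      · subst h
        simp only [hPεdef, if_pos rfl]
        have expand : ∀ i j, conj (QQ i + (ε:ℂ) * vv i) * R u₀ i j * (QQ j + (ε:ℂ) * vv j)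
            = conj (QQ i) * R u₀ i j * QQ j + (ε:ℂ) * (conj (QQ i) * R u₀ i j * vv j)
              + ((ε:ℂ) * (conj (vv i) * R u₀ i j * QQ j)
              + (ε:ℂ)^2 * (conj (vv i) * R u₀ i j * vv j)) := by
          intro i j
          rw [map_add, _root_.map_mul, Complex.conj_ofReal]
          ring
        simp_rw [expand]
        have key : ∑ i, ∑ j, (conj (QQ i) * R u₀ i j * QQ j
              + (ε:ℂ) * (conj (QQ i) * R u₀ i j * vv j)
              + ((ε:ℂ) * (conj (vv i) * R u₀ i j * QQ j)
              + (ε:ℂ)^2 * (conj (vv i) * R u₀ i j * vv j)))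
            = (∑ i, ∑ j, conj (QQ i) * R u₀ i j * QQ j)
              + (ε:ℂ) * (∑ i, ∑ j, conj (QQ i) * R u₀ i j * vv j)
              + ((ε:ℂ) * (∑ i, ∑ j, conj (vv i) * R u₀ i j * QQ j)
              + (ε:ℂ)^2 * (∑ i, ∑ j, conj (vv i) * R u₀ i j * vv j)) := by
          simp [Finset.sum_add_distrib, Finset.mul_sum]
        rw [key, hconjswap, hsvv]
        simp only [Complex.add_re, Complex.re_ofReal_mul, Complex.conj_re]
        have : ((ε:ℂ)^2 * (r u₀ : ℂ)).re = ε^2 * r u₀ := by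
          rw [← Complex.ofReal_pow, ← Complex.ofReal_mul, Complex.ofReal_re]
        rw [this, ← hb₀, ← hQQ]
        simp only [eq_self_iff_true, if_true]
        ring
      · simp [hPεdef, h]
    simp_rw [hsplit]
    rw [Finset.sum_add_distrib, Finset.sum_ite_eq' Finset.univ u₀]
    simp [hQQ]
  -- feasibility of the perturbed point
  have h1 : ε * β₁ ≤ t * |β₁| := by
    calc ε * β₁ ≤ |ε * β₁| := le_abs_self _
      _ = |ε| * |β₁| := abs_mul _ _
      _ = t * |β₁| := by rw [hεabs]
  have h2 : ε * β₂ ≤ t * |β₂| := by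
    calc ε * β₂ ≤ |ε * β₂| := le_abs_self _
      _ = |ε| * |β₂| := abs_mul _ _
      _ = t * |β₂| := by rw [hεabs]
  have htt : t ^ 2 ≤ t := by
    have := mul_le_mul_of_nonneg_right ht1 ht0.le
    calc t ^ 2 = t * t := sq t
      _ ≤ 1 * t := this
      _ = t := one_mul t
  have hexp1 : t * (2 * |β₁| + 2) = 2 * (t * |β₁|) + 2 * t := by ring
  have hexp2 : t * (2 * |β₂| + 2) = 2 * (t * |β₂|) + 2 * t := by ring
  have hψb : ψ Pε ≤ a := by rw [hψdiff]; linarith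
  have hψ'b : ψ' Pε ≤ ρ := by rw [hψ'diff]; linarith
  -- strict decrease of f
  have hneg : ε ^ 2 * r u₀ < 0 := by
    rw [hε2]
    exact mul_neg_of_pos_of_neg (pow_pos ht0 2) (hr u₀)
  have hlt : f Pε < f Q := by rw [hfdiff]; linarith
  have := hmin Pε hψb hψ'b
  linarith
end

section
/- Let N be a positive natural number and R : Matrix (Fin N) (Fin N) ℂ Hermitian with a negative eigenvalue, i.e., there exist r < 0 and a unit vector v ∈ ℂ^N with R v = r·v. Let K be any subset of EuclideanSpace ℂ (Fin N) and let p₀ lie in the (metric) interior of K. Then p₀ is not a minimizer of the quadratic form on K: there exists q ∈ K with Re(qᴴ R q) < Re(p₀ᴴ R p₀). -/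
open Finset Matrix ComplexConjugate

/-- General principle behind Theorem 2: if the Hermitian matrix `R` has a negative
eigenvalue `r` with unit eigenvector `v`, then no point in the metric interior of a
constraint set `K ⊆ EuclideanSpace ℂ (Fin N)` minimizes the quadratic form on `K`. -/
theorem stmt_16 (N : ℕ) (hN : 0 < N)
    (R : Matrix (Fin N) (Fin N) ℂ) (hR : R.IsHermitian)
    (r : ℝ) (hr : r < 0) (v : EuclideanSpace ℂ (Fin N))
    (hv : R *ᵥ (v : Fin N → ℂ) = (r : ℂ) • (v : Fin N → ℂ))
    (hv1 : ∑ i, conj (v i) * v i = 1)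
    (K : Set (EuclideanSpace ℂ (Fin N))) (p₀ : EuclideanSpace ℂ (Fin N))
    (hp₀ : p₀ ∈ interior K) :
    ∃ q ∈ K, (∑ i, ∑ j, conj (q i) * R i j * q j).re
      < (∑ i, ∑ j, conj (p₀ i) * R i j * p₀ j).re := by
  -- norm of v
  have hvnorm : ‖v‖ = 1 := by
    have h1 : (inner ℂ v v : ℂ) = 1 := by
      rw [PiLp.inner_apply, ← hv1]; refine sum_congr rfl fun i _ => ?_; rw [RCLike.inner_apply]; ring
    rw [inner_self_eq_norm_sq_to_K] at h1
    have h3 : ‖v‖^2 = 1 := by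
      have h2 := congrArg Complex.re h1
      simpa [← Complex.ofReal_pow] using h2
    nlinarith [norm_nonneg v]
  -- ball inside K
  obtain ⟨ε, hε, hball⟩ := Metric.isOpen_iff.mp isOpen_interior p₀ hp₀
  -- eigen equation componentwise
  have hmul : ∀ i, ∑ j, R i j * v j = (r : ℂ) * v i := by
    intro i
    have := congrFun hv i
    simpa [mulVec, dotProduct] using this
  have hTpv : ∀ p : EuclideanSpace ℂ (Fin N),
      (∑ i, ∑ j, conj (p i) * R i j * v j) = (r : ℂ) * ∑ i, conj (p i) * v i := by
    intro p
    calc (∑ i, ∑ j, conj (p i) * R i j * v j)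
        = ∑ i, conj (p i) * ∑ j, R i j * v j := by
          refine sum_congr rfl fun i _ => ?_
          rw [Finset.mul_sum]
          exact sum_congr rfl fun j _ => by ring
      _ = ∑ i, conj (p i) * ((r : ℂ) * v i) := by
          refine sum_congr rfl fun i _ => ?_; rw [hmul]
      _ = (r : ℂ) * ∑ i, conj (p i) * v i := by
          rw [Finset.mul_sum]; exact sum_congr rfl fun i _ => by ring
  have hherm : ∀ i j, (starRingEnd ℂ) (R i j) = R j i := by
    intro i j
    have := congrFun (congrFun hR j) i
    simpa [conjTranspose_apply] using this
  have hTvp : ∀ p : EuclideanSpace ℂ (Fin N),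
      (∑ i, ∑ j, conj (v i) * R i j * p j)
        = conj (∑ i, ∑ j, conj (p i) * R i j * v j) := by
    intro p
    rw [map_sum, Finset.sum_comm]
    refine sum_congr rfl fun j _ => ?_
    rw [map_sum]
    refine sum_congr rfl fun i _ => ?_
    simp only [_root_.map_mul, Complex.conj_conj, hherm]
    ring
  -- set up abbreviations
  set c : ℂ := ∑ i, conj (p₀ i) * v i with hc
  set A : ℂ := ∑ i, ∑ j, conj (p₀ i) * R i j * p₀ j with hA
  have expand : ∀ s : ℝ,
      (∑ i, ∑ j, conj ((p₀ + (s : ℂ) • v) i) * R i j * ((p₀ + (s : ℂ) • v) j))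
        = A + (s : ℂ) * (∑ i, ∑ j, conj (v i) * R i j * p₀ j)
            + (s : ℂ) * (∑ i, ∑ j, conj (p₀ i) * R i j * v j)
            + (s : ℂ)^2 * (∑ i, ∑ j, conj (v i) * R i j * v j) := by
    intro s
    rw [hA]
    rw [Finset.mul_sum, Finset.mul_sum, Finset.mul_sum, ← Finset.sum_add_distrib,
        ← Finset.sum_add_distrib, ← Finset.sum_add_distrib]
    refine sum_congr rfl fun i _ => ?_
    rw [Finset.mul_sum, Finset.mul_sum, Finset.mul_sum, ← Finset.sum_add_distrib,
        ← Finset.sum_add_distrib, ← Finset.sum_add_distrib]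
    refine sum_congr rfl fun j _ => ?_
    simp only [PiLp.add_apply, PiLp.smul_apply, smul_eq_mul, map_add, _root_.map_mul,
      Complex.conj_ofReal]
    ring
  have hTvv : (∑ i, ∑ j, conj (v i) * R i j * v j) = (r : ℂ) := by
    rw [hTpv v, hv1, mul_one]
  -- real part formula
  have hre : ∀ s : ℝ,
      (∑ i, ∑ j, conj ((p₀ + (s : ℂ) • v) i) * R i j * ((p₀ + (s : ℂ) • v) j)).re
        = A.re + 2 * s * (r * c.re) + s^2 * r := by
    intro s
    rw [expand s, hTpv p₀, hTvp p₀, hTpv p₀, hTvv, ← hc]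
    simp [Complex.add_re, Complex.mul_re, Complex.ofReal_re, Complex.ofReal_im,
      Complex.conj_re, Complex.conj_im, Complex.mul_im, pow_two]
    ring
  -- choose s
  set a : ℝ := r * c.re with ha
  set t : ℝ := ε / 2 with ht
  have htpos : 0 < t := by positivity
  set s : ℝ := if 0 ≤ a then -t else t with hs
  have hsa : s * a ≤ 0 := by
    by_cases h : 0 ≤ a
    · rw [hs, if_pos h]; nlinarith
    · rw [hs, if_neg h]; nlinarith [lt_of_not_ge h]
  have hs2 : s^2 = t^2 := by
    by_cases h : 0 ≤ a
    · rw [hs, if_pos h]; ring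
    · rw [hs, if_neg h]
  have habs : |s| = t := by
    by_cases h : 0 ≤ a
    · rw [hs, if_pos h, abs_neg, abs_of_pos htpos]
    · rw [hs, if_neg h, abs_of_pos htpos]
  refine ⟨p₀ + (s : ℂ) • v, ?_, ?_⟩
  · apply interior_subset
    apply hball
    rw [Metric.mem_ball, dist_eq_norm]
    have : p₀ + (s : ℂ) • v - p₀ = (s : ℂ) • v := by abel
    rw [this, norm_smul, hvnorm, mul_one]
    simp only [Complex.norm_real, Real.norm_eq_abs, habs]
    linarith
  · rw [hre s]
    have h1 : s^2 * r < 0 := by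
      rw [hs2]
      have ht2 : (0:ℝ) < t ^ 2 := by positivity
      exact mul_neg_of_pos_of_neg ht2 hr
    nlinarith
end
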